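/- Let q ≥ 0, τ ∈ (0,1], and w = (w₁, w₂) ∈ ℝ². Define λ(w) = 1/(1 + q|w|) and let D_τ(w) be the symmetric 2×2 matrix with entries D₁₁ = 1 + τ + (w₁²/(|w|² + τ))(λ(w) − 1), D₁₂ = D₂₁ = (w₁ w₂/(|w|² + τ))(λ(w) − 1), D₂₂ = 1 + τ + (w₂²/(|w|² + τ))(λ(w) − 1). Then for every ξ ∈ ℝ²: D_τ(w) ξ · ξ = (1 + τ)|ξ|² + (λ(w) − 1)(w · ξ)²/(|w|² + τ) ≥ (1/(1 + q|w|) + τ) |ξ|². -/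

import Mathlib

open Matrix
open scoped RealInnerProductSpace

/-- Identity and lower bound (3.5) for the regularized mobility matrix `D_τ(w)`. -/
theorem stmt_5 (q τ : ℝ) (hq : 0 ≤ q) (hτ0 : 0 < τ) (hτ1 : τ ≤ 1)
    (w : EuclideanSpace ℝ (Fin 2))
    (lam : ℝ) (hlam : lam = 1 / (1 + q * ‖w‖))
    (D : Matrix (Fin 2) (Fin 2) ℝ)
    (hD : D = !![1 + τ + (w 0) ^ 2 / (‖w‖ ^ 2 + τ) * (lam - 1),
                 (w 0) * (w 1) / (‖w‖ ^ 2 + τ) * (lam - 1);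
                 (w 0) * (w 1) / (‖w‖ ^ 2 + τ) * (lam - 1),
                 1 + τ + (w 1) ^ 2 / (‖w‖ ^ 2 + τ) * (lam - 1)]) :
    ∀ ξ : EuclideanSpace ℝ (Fin 2),
      D.mulVec ξ ⬝ᵥ (ξ : Fin 2 → ℝ) =
          (1 + τ) * ‖ξ‖ ^ 2 + (lam - 1) * ⟪w, ξ⟫ ^ 2 / (‖w‖ ^ 2 + τ) ∧
        D.mulVec ξ ⬝ᵥ (ξ : Fin 2 → ℝ) ≥ (1 / (1 + q * ‖w‖) + τ) * ‖ξ‖ ^ 2 := by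
  intro ξ
  have hw2 : ‖w‖ ^ 2 = (w 0) ^ 2 + (w 1) ^ 2 := by
    rw [EuclideanSpace.norm_eq]
    rw [Real.sq_sqrt (by positivity)]
    simp [Fin.sum_univ_two, sq_abs]
  have hx2 : ‖ξ‖ ^ 2 = (ξ 0) ^ 2 + (ξ 1) ^ 2 := by
    rw [EuclideanSpace.norm_eq]
    rw [Real.sq_sqrt (by positivity)]
    simp [Fin.sum_univ_two, sq_abs]
  have hinn : ⟪w, ξ⟫ = w 0 * ξ 0 + w 1 * ξ 1 := by
    simp [EuclideanSpace.inner_eq_star_dotProduct, dotProduct, Fin.sum_univ_two, mul_comm]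
  have ha : (0:ℝ) < ‖w‖ ^ 2 + τ := by positivity
  have hb : (0:ℝ) < 1 + q * ‖w‖ := by positivity
  have hlam1 : lam ≤ 1 := by
    rw [hlam, div_le_one hb]; nlinarith [norm_nonneg w, mul_nonneg hq (norm_nonneg w)]
  have hlam0 : 0 < lam := by rw [hlam]; positivity
  have hid : D.mulVec ξ ⬝ᵥ (ξ : Fin 2 → ℝ) =
      (1 + τ) * ‖ξ‖ ^ 2 + (lam - 1) * ⟪w, ξ⟫ ^ 2 / (‖w‖ ^ 2 + τ) := by
    simp only [hD, Matrix.mulVec, dotProduct, Fin.sum_univ_two, Matrix.of_apply,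
      Matrix.cons_val', Matrix.cons_val_zero, Matrix.cons_val_one, Matrix.head_cons,
      Matrix.empty_val', Matrix.cons_val_fin_one, Matrix.head_fin_const]
    rw [hx2, hinn]
    field_simp
    ring
  refine ⟨hid, ?_⟩
  rw [hid]
  have hcs : ⟪w, ξ⟫ ^ 2 ≤ ‖w‖ ^ 2 * ‖ξ‖ ^ 2 := by
    have := abs_real_inner_le_norm w ξ
    nlinarith [abs_nonneg ⟪w, ξ⟫, sq_abs ⟪w, ξ⟫]
  have key : (lam - 1) * ⟪w, ξ⟫ ^ 2 / (‖w‖ ^ 2 + τ) ≥ (lam - 1) * ‖ξ‖ ^ 2 := by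
    rw [ge_iff_le, le_div_iff₀ ha]
    nlinarith [mul_nonneg (sub_nonneg.2 hlam1) (sub_nonneg.2 hcs),
      mul_nonneg (mul_nonneg (sub_nonneg.2 hlam1) (sq_nonneg ‖ξ‖)) hτ0.le]
  rw [← hlam]
  nlinarith [key]
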